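/- (Ordering of singular tubes, part 1.) Let M₃,…,M_p be invertible with each M_k = c_k W_k, c_k ≠ 0 and W_k orthogonal, and let A = U ⋆M S ⋆M Vᵀ be a t-SVDM of A ∈ ℝ^{n₁×n₂×⋯×n_p} with t-rank r. Then ‖A‖_F² = ‖S‖_F² = Σ_{i=1}^{r} ‖s_i‖_F², where s_i = S(i,i,:,…,:) is the (i,i)-singular tube of S. -/
import Mathlib


open Matrix

/-!
Order-`p` real tensors (`p = q + 2`) are represented as families of frontal
slices: a tensor `A ∈ ℝ^{n₁ × n₂ × n₃ × ⋯ × n_p}` is a function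
`A : TI m → Matrix (Fin n₁) (Fin n₂) ℝ`, where `TI m = ∀ k : Fin q, Fin (m k)`
is the trailing multi-index `(i₃, …, i_p)` and `A i` is the frontal slice
`A(:,:,i₃,…,i_p)`.
-/

namespace TSVDM

variable {q : ℕ} {m : Fin q → ℕ}

/-- Trailing multi-index `(i₃, …, i_p)`. -/
abbrev TI (m : Fin q → ℕ) : Type := ∀ k, Fin (m k)

/-- Transform-domain tensor `Â = A ×₃ M₃ ×₄ M₄ ⋯ ×_p M_p`
(mode-`k` products along all trailing modes). -/
noncomputable def hat (M : ∀ k, Matrix (Fin (m k)) (Fin (m k)) ℝ) {a b : Type}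
    (A : TI m → Matrix a b ℝ) : TI m → Matrix a b ℝ :=
  fun i => ∑ j : TI m, (∏ k, M k (i k) (j k)) • A j

/-- Inverse transform `×₃ M₃⁻¹ ×₄ M₄⁻¹ ⋯ ×_p M_p⁻¹`. -/
noncomputable def unhat (M : ∀ k, Matrix (Fin (m k)) (Fin (m k)) ℝ) {a b : Type}
    (A : TI m → Matrix a b ℝ) : TI m → Matrix a b ℝ :=
  fun i => ∑ j : TI m, (∏ k, (M k)⁻¹ (i k) (j k)) • A j

/-- The `⋆M`-product: `A ⋆M B = (Â △ B̂) ×₃ M₃⁻¹ ⋯ ×_p M_p⁻¹`, where `△` is the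
facewise product (slice-wise matrix multiplication). -/
noncomputable def starM (M : ∀ k, Matrix (Fin (m k)) (Fin (m k)) ℝ)
    {a b c : Type} [Fintype b]
    (A : TI m → Matrix a b ℝ) (B : TI m → Matrix b c ℝ) : TI m → Matrix a c ℝ :=
  unhat M (fun i => hat M A i * hat M B i)

/-- The `⋆M`-transpose: transpose every transform-domain frontal slice. -/
noncomputable def transM (M : ∀ k, Matrix (Fin (m k)) (Fin (m k)) ℝ) {a b : Type}
    (A : TI m → Matrix a b ℝ) : TI m → Matrix b a ℝ :=
  unhat M (fun i => (hat M A i)ᵀ)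

/-- The `⋆M`-identity: all transform-domain frontal slices equal the identity matrix. -/
noncomputable def idM (M : ∀ k, Matrix (Fin (m k)) (Fin (m k)) ℝ)
    (a : Type) [DecidableEq a] : TI m → Matrix a a ℝ :=
  unhat M (fun _ => (1 : Matrix a a ℝ))

/-- `Q` is `⋆M`-orthogonal if `Qᵀ ⋆M Q = Q ⋆M Qᵀ = I`. -/
def IsStarMOrthogonal (M : ∀ k, Matrix (Fin (m k)) (Fin (m k)) ℝ)
    {a : Type} [Fintype a] [DecidableEq a] (Q : TI m → Matrix a a ℝ) : Prop :=
  starM M (transM M Q) Q = idM M a ∧ starM M Q (transM M Q) = idM M a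

/-- Frobenius norm of a tensor. -/
noncomputable def frob {a b : Type} [Fintype a] [Fintype b]
    (A : TI m → Matrix a b ℝ) : ℝ :=
  Real.sqrt (∑ i : TI m, ∑ r : a, ∑ c : b, A i r c ^ 2)

/-- Diagonal position `(j, j)`: row index. -/
def dIdx₁ {n₁ n₂ : ℕ} (j : Fin (min n₁ n₂)) : Fin n₁ :=
  ⟨j.1, lt_of_lt_of_le j.2 (Nat.min_le_left n₁ n₂)⟩

/-- Diagonal position `(j, j)`: column index. -/
def dIdx₂ {n₁ n₂ : ℕ} (j : Fin (min n₁ n₂)) : Fin n₂ :=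
  ⟨j.1, lt_of_lt_of_le j.2 (Nat.min_le_right n₁ n₂)⟩

/-- `A = U ⋆M S ⋆M Vᵀ` is a t-SVDM of `A`: `U`, `V` are `⋆M`-orthogonal, `S` is
f-diagonal (each transform-domain frontal slice is diagonal), and the diagonal
entries of each frontal slice of `Ŝ` are nonnegative and in descending order. -/
structure IsTSVDM (M : ∀ k, Matrix (Fin (m k)) (Fin (m k)) ℝ) {n₁ n₂ : ℕ}
    (A : TI m → Matrix (Fin n₁) (Fin n₂) ℝ)
    (U : TI m → Matrix (Fin n₁) (Fin n₁) ℝ)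
    (S : TI m → Matrix (Fin n₁) (Fin n₂) ℝ)
    (V : TI m → Matrix (Fin n₂) (Fin n₂) ℝ) : Prop where
  decomp : A = starM M (starM M U S) (transM M V)
  orthU : IsStarMOrthogonal M U
  orthV : IsStarMOrthogonal M V
  fdiag : ∀ (i : TI m) (a : Fin n₁) (b : Fin n₂), (a : ℕ) ≠ (b : ℕ) → hat M S i a b = 0
  nonneg : ∀ (i : TI m) (j : Fin (min n₁ n₂)), 0 ≤ hat M S i (dIdx₁ j) (dIdx₂ j)
  descend : ∀ (i : TI m) (j j' : Fin (min n₁ n₂)), j ≤ j' →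
    hat M S i (dIdx₁ j') (dIdx₂ j') ≤ hat M S i (dIdx₁ j) (dIdx₂ j)

/-- The `(j,j)`-singular tube of `S`, as a function of the trailing multi-index. -/
def tube {n₁ n₂ : ℕ} (S : TI m → Matrix (Fin n₁) (Fin n₂) ℝ)
    (j : Fin (min n₁ n₂)) : TI m → ℝ :=
  fun i => S i (dIdx₁ j) (dIdx₂ j)

/-- Frobenius norm of the `(j,j)`-singular tube of `S`. -/
noncomputable def tubeNorm {n₁ n₂ : ℕ} (S : TI m → Matrix (Fin n₁) (Fin n₂) ℝ)
    (j : Fin (min n₁ n₂)) : ℝ :=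
  Real.sqrt (∑ i : TI m, tube S j i ^ 2)

/-- `r` is the t-rank: the number of nonzero singular tubes (tubes `s₁,…,s_r`
are nonzero and the remaining ones vanish). -/
def HasTRank {n₁ n₂ : ℕ} (S : TI m → Matrix (Fin n₁) (Fin n₂) ℝ) (r : ℕ) : Prop :=
  ∀ j : Fin (min n₁ n₂), ((j : ℕ) < r ↔ tube S j ≠ 0)

/-- Keep only the first `k` lateral slices (columns of each frontal slice). -/
def truncCols {n k : ℕ} (hk : k ≤ n) {a : Type}
    (U : TI m → Matrix a (Fin n) ℝ) : TI m → Matrix a (Fin k) ℝ :=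
  fun i => Matrix.of fun r c => U i r (Fin.castLE hk c)

/-- Keep only the leading `k × k` block of each frontal slice. -/
def truncBlock {n₁ n₂ k : ℕ} (h₁ : k ≤ n₁) (h₂ : k ≤ n₂)
    (S : TI m → Matrix (Fin n₁) (Fin n₂) ℝ) : TI m → Matrix (Fin k) (Fin k) ℝ :=
  fun i => Matrix.of fun a b => S i (Fin.castLE h₁ a) (Fin.castLE h₂ b)

/-- The t-rank-`k` truncation `A_k = U_k ⋆M S_k ⋆M V_kᵀ`. -/
noncomputable def truncApprox (M : ∀ k, Matrix (Fin (m k)) (Fin (m k)) ℝ)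
    {n₁ n₂ : ℕ} (U : TI m → Matrix (Fin n₁) (Fin n₁) ℝ)
    (S : TI m → Matrix (Fin n₁) (Fin n₂) ℝ)
    (V : TI m → Matrix (Fin n₂) (Fin n₂) ℝ) (k : ℕ) (hk : k ≤ min n₁ n₂) :
    TI m → Matrix (Fin n₁) (Fin n₂) ℝ :=
  starM M
    (starM M (truncCols (le_trans hk (Nat.min_le_left _ _)) U)
      (truncBlock (le_trans hk (Nat.min_le_left _ _)) (le_trans hk (Nat.min_le_right _ _)) S))
    (transM M (truncCols (le_trans hk (Nat.min_le_right _ _)) V))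

/-- The `j`-th lateral slice `A(:,j,:,…,:)`, as an `n₁ × 1 × n₃ × ⋯ × n_p` tensor. -/
def lateral {n₁ n₂ : ℕ} (A : TI m → Matrix (Fin n₁) (Fin n₂) ℝ) (j : Fin n₂) :
    TI m → Matrix (Fin n₁) (Fin 1) ℝ :=
  fun i => Matrix.of fun r _ => A i r j

/-- The `(j,j)`-singular tube of `S` regarded as a `1 × 1 × n₃ × ⋯ × n_p` tensor. -/
def tubeT {n₁ n₂ : ℕ} (S : TI m → Matrix (Fin n₁) (Fin n₂) ℝ)
    (j : Fin (min n₁ n₂)) : TI m → Matrix (Fin 1) (Fin 1) ℝ :=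
  fun i => Matrix.of fun _ _ => S i (dIdx₁ j) (dIdx₂ j)


section Aux

lemma sum_prod_mul (P Q : ∀ k, Matrix (Fin (m k)) (Fin (m k)) ℝ) (i j : TI m) :
    ∑ l : TI m, (∏ k, P k (i k) (l k)) * (∏ k, Q k (l k) (j k)) =
      ∏ k, (P k * Q k) (i k) (j k) := by
  simp only [Matrix.mul_apply]
  rw [Finset.prod_univ_sum, Fintype.piFinset_univ]
  exact Finset.sum_congr rfl fun l _ => (Finset.prod_mul_distrib).symm

lemma key_sum (N : ∀ k, Matrix (Fin (m k)) (Fin (m k)) ℝ) (d : Fin q → ℝ)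
    (h : ∀ k, (N k)ᵀ * N k = d k • (1 : Matrix (Fin (m k)) (Fin (m k)) ℝ))
    (f : TI m → ℝ) :
    ∑ i : TI m, (∑ j : TI m, (∏ k, N k (i k) (j k)) * f j) ^ 2 =
      (∏ k, d k) * ∑ j : TI m, f j ^ 2 := by
  have hw : ∀ j j' : TI m,
      (∑ i : TI m, (∏ k, N k (i k) (j k)) * ∏ k, N k (i k) (j' k)) =
        (∏ k, d k) * (if j = j' then 1 else 0) := by
    intro j j'
    have h1 : (∑ i : TI m, (∏ k, (N k)ᵀ (j k) (i k)) * ∏ k, N k (i k) (j' k)) =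
        ∏ k, ((N k)ᵀ * N k) (j k) (j' k) := sum_prod_mul _ _ _ _
    simp only [Matrix.transpose_apply] at h1
    rw [h1]
    simp only [h, Matrix.smul_apply, Matrix.one_apply, smul_eq_mul]
    rw [Finset.prod_mul_distrib]
    congr 1
    by_cases hjj : j = j'
    · simp [hjj]
    · obtain ⟨k, hk⟩ := Function.ne_iff.mp hjj
      rw [if_neg hjj]
      exact Finset.prod_eq_zero (Finset.mem_univ k) (by simp [hk])
  calc ∑ i : TI m, (∑ j : TI m, (∏ k, N k (i k) (j k)) * f j) ^ 2
      = ∑ i : TI m, ∑ j : TI m, ∑ j' : TI m,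
          ((∏ k, N k (i k) (j k)) * ∏ k, N k (i k) (j' k)) * (f j * f j') := by
        refine Finset.sum_congr rfl fun i _ => ?_
        rw [sq, Finset.sum_mul_sum]
        exact Finset.sum_congr rfl fun j _ =>
          Finset.sum_congr rfl fun j' _ => by ring
    _ = ∑ j : TI m, ∑ j' : TI m, (∑ i : TI m,
          ((∏ k, N k (i k) (j k)) * ∏ k, N k (i k) (j' k))) * (f j * f j') := by
        rw [Finset.sum_comm]
        refine Finset.sum_congr rfl fun j _ => ?_
        rw [Finset.sum_comm]
        exact Finset.sum_congr rfl fun j' _ => (Finset.sum_mul _ _ _).symm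
    _ = (∏ k, d k) * ∑ j : TI m, f j ^ 2 := by
        simp only [hw, mul_ite, mul_one, mul_zero, ite_mul, zero_mul]
        rw [Finset.mul_sum]
        refine Finset.sum_congr rfl fun j _ => ?_
        rw [Finset.sum_ite_eq, if_pos (Finset.mem_univ j)]
        ring

lemma hat_apply (M : ∀ k, Matrix (Fin (m k)) (Fin (m k)) ℝ) {a b : Type}
    (A : TI m → Matrix a b ℝ) (i : TI m) (r : a) (s : b) :
    hat M A i r s = ∑ j : TI m, (∏ k, M k (i k) (j k)) * A j r s := by
  simp [hat, Matrix.sum_apply]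

lemma hat_unhat (M : ∀ k, Matrix (Fin (m k)) (Fin (m k)) ℝ)
    (hMinv : ∀ k, M k * (M k)⁻¹ = 1) {a b : Type}
    (A : TI m → Matrix a b ℝ) : hat M (unhat M A) = A := by
  funext i
  ext r s
  rw [hat_apply]
  simp only [unhat, Matrix.sum_apply, Matrix.smul_apply, smul_eq_mul]
  simp_rw [Finset.mul_sum, ← mul_assoc]
  rw [Finset.sum_comm]
  have hco : ∀ j : TI m,
      ∑ l : TI m, (∏ k, M k (i k) (l k)) * (∏ k, (M k)⁻¹ (l k) (j k)) =
        if i = j then 1 else 0 := by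
    intro j
    rw [sum_prod_mul]
    simp only [hMinv]
    by_cases hij : i = j
    · simp [hij, Matrix.one_apply]
    · obtain ⟨k, hk⟩ := Function.ne_iff.mp hij
      rw [if_neg hij]
      exact Finset.prod_eq_zero (Finset.mem_univ k)
        (by simp [Matrix.one_apply, hk])
  simp_rw [← Finset.sum_mul, hco, ite_mul, one_mul, zero_mul,
    Finset.sum_ite_eq, Finset.mem_univ, if_true]

lemma hat_starM_apply (M : ∀ k, Matrix (Fin (m k)) (Fin (m k)) ℝ)
    (hMinv : ∀ k, M k * (M k)⁻¹ = 1) {a b c : Type} [Fintype b]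
    (A : TI m → Matrix a b ℝ) (B : TI m → Matrix b c ℝ) (i : TI m) :
    hat M (starM M A B) i = hat M A i * hat M B i := by
  unfold starM; rw [hat_unhat M hMinv]

lemma hat_transM_apply (M : ∀ k, Matrix (Fin (m k)) (Fin (m k)) ℝ)
    (hMinv : ∀ k, M k * (M k)⁻¹ = 1) {a b : Type}
    (A : TI m → Matrix a b ℝ) (i : TI m) :
    hat M (transM M A) i = (hat M A i)ᵀ := by
  unfold transM; rw [hat_unhat M hMinv]

lemma hat_idM_apply (M : ∀ k, Matrix (Fin (m k)) (Fin (m k)) ℝ)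
    (hMinv : ∀ k, M k * (M k)⁻¹ = 1) (a : Type) [DecidableEq a] (i : TI m) :
    hat M (idM M a) i = 1 := by
  unfold idM; rw [hat_unhat M hMinv]

lemma msq_eq_trace {a b : Type} [Fintype a] [Fintype b] (X : Matrix a b ℝ) :
    ∑ r : a, ∑ s : b, X r s ^ 2 = Matrix.trace (Xᵀ * X) := by
  simp only [Matrix.trace, Matrix.diag, Matrix.mul_apply, Matrix.transpose_apply, sq]
  exact Finset.sum_comm

lemma msq_orth {a b : Type} [Fintype a] [Fintype b] [DecidableEq a] [DecidableEq b]
    (P : Matrix a a ℝ) (X : Matrix a b ℝ) (Q : Matrix b b ℝ)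
    (hP : Pᵀ * P = 1) (hQ : Qᵀ * Q = 1) :
    ∑ r : a, ∑ s : b, (P * X * Qᵀ) r s ^ 2 = ∑ r : a, ∑ s : b, X r s ^ 2 := by
  rw [msq_eq_trace, msq_eq_trace]
  have h1 : (P * X * Qᵀ)ᵀ * (P * X * Qᵀ) = Q * (Xᵀ * (X * Qᵀ)) := by
    simp only [Matrix.transpose_mul, Matrix.transpose_transpose, Matrix.mul_assoc]
    rw [← Matrix.mul_assoc Pᵀ P, hP, Matrix.one_mul]
  rw [h1, Matrix.trace_mul_comm]
  simp only [Matrix.mul_assoc]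
  rw [hQ, Matrix.mul_one]

end Aux

/-- (Ordering of singular tubes, part 1.)
`‖A‖_F² = ‖S‖_F² = Σ_{i=1}^{r} ‖s_i‖_F²` for a t-SVDM of `A` with t-rank `r`. -/
theorem frob_sq_eq_sum_tubeNorm_sq {q : ℕ} {m : Fin q → ℕ}
    (M : ∀ k, Matrix (Fin (m k)) (Fin (m k)) ℝ)
    (c : Fin q → ℝ) (W : ∀ k, Matrix (Fin (m k)) (Fin (m k)) ℝ)
    (hc : ∀ k, c k ≠ 0)
    (hW : ∀ k, W k * (W k)ᵀ = 1 ∧ (W k)ᵀ * W k = 1)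
    (hM : ∀ k, M k = c k • W k)
    {n₁ n₂ : ℕ} (A : TI m → Matrix (Fin n₁) (Fin n₂) ℝ)
    (U : TI m → Matrix (Fin n₁) (Fin n₁) ℝ)
    (S : TI m → Matrix (Fin n₁) (Fin n₂) ℝ)
    (V : TI m → Matrix (Fin n₂) (Fin n₂) ℝ)
    (hSVD : IsTSVDM M A U S V) (r : ℕ) (hr : HasTRank S r) :
    frob A ^ 2 = frob S ^ 2 ∧
    frob S ^ 2 =
      ∑ j ∈ Finset.univ.filter (fun j : Fin (min n₁ n₂) => (j : ℕ) < r),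
        tubeNorm S j ^ 2 := by
  classical
  have hMr : ∀ k, M k * ((c k)⁻¹ • (W k)ᵀ) = 1 := by
    intro k
    rw [hM k, Matrix.smul_mul, Matrix.mul_smul, smul_smul, (hW k).1,
      mul_inv_cancel₀ (hc k), one_smul]
  have hMinv : ∀ k, M k * (M k)⁻¹ = 1 := fun k => by
    rw [Matrix.inv_eq_right_inv (hMr k)]; exact hMr k
  have hNM : ∀ k, (M k)ᵀ * M k
      = ((c k) ^ 2) • (1 : Matrix (Fin (m k)) (Fin (m k)) ℝ) := by
    intro k
    rw [hM k, Matrix.transpose_smul, Matrix.smul_mul, Matrix.mul_smul, smul_smul,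
      (hW k).2, sq]
  set C := ∏ k, (c k) ^ 2 with hCdef
  have hC0 : C ≠ 0 := Finset.prod_ne_zero_iff.mpr fun k _ => pow_ne_zero 2 (hc k)
  have e1 : ∀ {a b : Type} (X : TI m → Matrix a b ℝ) (r : a) (s : b),
      ∑ i : TI m, hat M X i r s ^ 2 = C * ∑ i : TI m, X i r s ^ 2 := by
    intro a b X r s
    simp_rw [hat_apply]
    exact key_sum M (fun k => (c k) ^ 2) hNM (fun i => X i r s)
  have hkey : ∀ {a b : Type} [Fintype a] [Fintype b] (X : TI m → Matrix a b ℝ),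
      (∑ i : TI m, ∑ r, ∑ s, hat M X i r s ^ 2)
        = C * ∑ i : TI m, ∑ r, ∑ s, X i r s ^ 2 := by
    intro a b _ _ X
    calc (∑ i : TI m, ∑ r, ∑ s, hat M X i r s ^ 2)
        = ∑ r, ∑ i : TI m, ∑ s, hat M X i r s ^ 2 := Finset.sum_comm
      _ = ∑ r, ∑ s, ∑ i : TI m, hat M X i r s ^ 2 :=
          Finset.sum_congr rfl fun r _ => Finset.sum_comm
      _ = ∑ r, ∑ s, C * ∑ i : TI m, X i r s ^ 2 :=
          Finset.sum_congr rfl fun r _ => Finset.sum_congr rfl fun s _ => e1 X r s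
      _ = C * ∑ r, ∑ s, ∑ i : TI m, X i r s ^ 2 := by
          simp_rw [← Finset.mul_sum]
      _ = C * ∑ r, ∑ i : TI m, ∑ s, X i r s ^ 2 := by
          rw [Finset.sum_congr rfl fun r (_ : r ∈ Finset.univ) =>
            (Finset.sum_comm : (∑ s, ∑ i : TI m, X i r s ^ 2) = _)]
      _ = C * ∑ i : TI m, ∑ r, ∑ s, X i r s ^ 2 := by rw [Finset.sum_comm]
  have hUo : ∀ i, (hat M U i)ᵀ * hat M U i = 1 := by
    intro i
    have h := congrFun (congrArg (hat M) hSVD.orthU.1) i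
    rwa [hat_starM_apply M hMinv, hat_transM_apply M hMinv,
      hat_idM_apply M hMinv] at h
  have hVo : ∀ i, (hat M V i)ᵀ * hat M V i = 1 := by
    intro i
    have h := congrFun (congrArg (hat M) hSVD.orthV.1) i
    rwa [hat_starM_apply M hMinv, hat_transM_apply M hMinv,
      hat_idM_apply M hMinv] at h
  have hAhat : ∀ i, hat M A i = hat M U i * hat M S i * (hat M V i)ᵀ := by
    intro i
    rw [hSVD.decomp, hat_starM_apply M hMinv, hat_starM_apply M hMinv,
      hat_transM_apply M hMinv]
  have hfsq : (∑ i : TI m, ∑ r, ∑ s, A i r s ^ 2)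
      = ∑ i : TI m, ∑ r, ∑ s, S i r s ^ 2 := by
    have h3 : (∑ i : TI m, ∑ r, ∑ s, hat M A i r s ^ 2)
        = ∑ i : TI m, ∑ r, ∑ s, hat M S i r s ^ 2 := by
      refine Finset.sum_congr rfl fun i _ => ?_
      rw [hAhat i]
      exact msq_orth _ _ _ (hUo i) (hVo i)
    exact mul_left_cancel₀ hC0 (by rw [← hkey A, h3, hkey S])
  have hnnA : (0:ℝ) ≤ ∑ i : TI m, ∑ r, ∑ s, A i r s ^ 2 := by positivity
  have hnnS : (0:ℝ) ≤ ∑ i : TI m, ∑ r, ∑ s, S i r s ^ 2 := by positivity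
  have hoff : ∀ (a : Fin n₁) (b : Fin n₂), (a:ℕ) ≠ (b:ℕ) →
      ∑ i : TI m, S i a b ^ 2 = 0 := by
    intro a b hab
    have h := e1 S a b
    simp only [hSVD.fdiag _ a b hab, ne_eq, OfNat.ofNat_ne_zero,
      not_false_eq_true, zero_pow, Finset.sum_const_zero] at h
    exact (mul_eq_zero.mp h.symm).resolve_left hC0
  have htn : ∀ j : Fin (min n₁ n₂),
      tubeNorm S j ^ 2 = ∑ i : TI m, S i (dIdx₁ j) (dIdx₂ j) ^ 2 := by
    intro j
    rw [tubeNorm, Real.sq_sqrt (by positivity)]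
    rfl
  have hdiagsum : (∑ i : TI m, ∑ r, ∑ s, S i r s ^ 2)
      = ∑ j : Fin (min n₁ n₂), ∑ i : TI m, S i (dIdx₁ j) (dIdx₂ j) ^ 2 := by
    set ι : Fin (min n₁ n₂) → Fin n₁ × Fin n₂ := fun j => (dIdx₁ j, dIdx₂ j)
      with hι
    have step1 : (∑ i : TI m, ∑ r, ∑ s, S i r s ^ 2)
        = ∑ p : Fin n₁ × Fin n₂, ∑ i : TI m, S i p.1 p.2 ^ 2 := by
      rw [Fintype.sum_prod_type]
      calc (∑ i : TI m, ∑ r, ∑ s, S i r s ^ 2)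
          = ∑ r, ∑ i : TI m, ∑ s, S i r s ^ 2 := Finset.sum_comm
        _ = ∑ r, ∑ s, ∑ i : TI m, S i r s ^ 2 :=
            Finset.sum_congr rfl fun r _ => Finset.sum_comm
    have hinj : ∀ x ∈ (Finset.univ : Finset (Fin (min n₁ n₂))),
        ∀ y ∈ Finset.univ, ι x = ι y → x = y := by
      intro x _ y _ h
      have h1 : ((dIdx₁ x : Fin n₁) : ℕ) = ((dIdx₁ y : Fin n₁) : ℕ) :=
        congrArg (fun p : Fin n₁ × Fin n₂ => (p.1 : ℕ)) h
      exact Fin.ext h1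
    have step2 : (∑ p : Fin n₁ × Fin n₂, ∑ i : TI m, S i p.1 p.2 ^ 2)
        = ∑ p ∈ Finset.univ.image ι, ∑ i : TI m, S i p.1 p.2 ^ 2 := by
      refine (Finset.sum_subset (Finset.subset_univ _) ?_).symm
      intro p _ hp
      by_cases hd : (p.1 : ℕ) = (p.2 : ℕ)
      · exfalso
        apply hp
        refine Finset.mem_image.mpr ⟨⟨(p.1 : ℕ), lt_min p.1.2
          (by rw [hd]; exact p.2.2)⟩, Finset.mem_univ _, ?_⟩
        exact Prod.ext_iff.mpr ⟨Fin.ext rfl, Fin.ext hd⟩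
      · exact hoff p.1 p.2 hd
    rw [step1, step2, Finset.sum_image hinj]
  refine ⟨?_, ?_⟩
  · simp only [frob]
    rw [Real.sq_sqrt hnnA, Real.sq_sqrt hnnS, hfsq]
  · simp only [frob]
    rw [Real.sq_sqrt hnnS, hdiagsum]
    simp_rw [← htn]
    refine (Finset.sum_filter_of_ne fun j _ hne => ?_).symm
    by_contra hjr
    apply hne
    have ht0 : tube S j = 0 := not_not.mp fun h => hjr ((hr j).mpr h)
    rw [htn j]
    have hz : ∀ i : TI m, S i (dIdx₁ j) (dIdx₂ j) = 0 := fun i => congrFun ht0 i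
    simp [hz]

end TSVDM
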